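/- Let R be a finite family of closed unit disks in ℝ², and let I ⊆ R be a nonempty subfamily of pairwise disjoint disks such that every disk in R intersects some disk in I. Let P be a closed polygonal curve whose vertices, in cyclic order, are exactly the centers of the disks of I, each visited exactly once (consecutive vertices joined by straight segments). Then there exists a closed rectifiable curve of length at most π·length(P) + 2π whose image intersects every disk in R. -/

import Mathlib

open Set Metric MeasureTheory Real

noncomputable section Ineq1Aux

namespace Ineq1
open scoped NNReal ENNReal
open Fin.NatCast

lemma evar_lip {f : ℝ → ℂ} {C : NNReal} {a b : ℝ} (hab : a ≤ b)
    (h : LipschitzOnWith C f (Icc a b)) :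
    eVariationOn f (Icc a b) ≤ C * ENNReal.ofReal (b - a) := by
  have h1 : eVariationOn (f ∘ id) (Icc a b) ≤ C * eVariationOn id (Icc a b) :=
    h.comp_eVariationOn_le (mapsTo_id _)
  have h2 : eVariationOn (id : ℝ → ℝ) (Icc a b) ≤ ENNReal.ofReal (b - a) := by
    have := (monotoneOn_id (s := Icc a b)).eVariationOn_le
      (left_mem_Icc.2 hab) (right_mem_Icc.2 hab)
    simpa using this
  calc eVariationOn f (Icc a b) = eVariationOn (f ∘ id) (Icc a b) := rfl
    _ ≤ C * eVariationOn id (Icc a b) := h1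
    _ ≤ C * ENNReal.ofReal (b - a) := by exact mul_le_mul_right h2 _

lemma cont_glue {f : ℝ → ℂ} {a b c : ℝ} (hab : a ≤ b) (hbc : b ≤ c)
    (h1 : ContinuousOn f (Icc a b)) (h2 : ContinuousOn f (Icc b c)) :
    ContinuousOn f (Icc a c) := by
  rw [← Icc_union_Icc_eq_Icc hab hbc]
  intro x hx
  apply ContinuousWithinAt.union
  · by_cases h : x ∈ Icc a b
    · exact h1 x h
    · exact continuousWithinAt_of_notMem_closure (by rwa [isClosed_Icc.closure_eq])
  · by_cases h : x ∈ Icc b c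
    · exact h2 x h
    · exact continuousWithinAt_of_notMem_closure (by rwa [isClosed_Icc.closure_eq])

lemma sum_pair (f : ℕ → ℝ) (N : ℕ) :
    ∑ m ∈ Finset.range (2*N), f m = ∑ j ∈ Finset.range N, (f (2*j) + f (2*j+1)) := by
  induction N with
  | zero => simp
  | succ N ih =>
      have : 2*(N+1) = (2*N+1)+1 := by omega
      rw [this, Finset.sum_range_succ, Finset.sum_range_succ, ih, Finset.sum_range_succ]
      rw [add_assoc]



variable (k : ℕ) (z : Fin (k+1) → ℂ)

def LL (i : Fin (k+1)) : ℝ := dist (z i) (z (i+1))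
def uu (i : Fin (k+1)) : ℂ := (z (i+1) - z i) / ((LL k z i : ℝ) : ℂ)
def aa (i : Fin (k+1)) : ℝ := (uu k z i).arg
def ph (i : Fin (k+1)) : ℝ := aa k z (i-1) + π
def de (i : Fin (k+1)) : ℝ :=
  (aa k z i - ph k z i) - 2*π*⌊(aa k z i - ph k z i)/(2*π)⌋

def A1 (i : Fin (k+1)) (s : ℝ) : ℂ :=
  z i + Complex.exp ((↑(ph k z i + s * de k z i) : ℂ) * Complex.I)
def A2 (i : Fin (k+1)) (s : ℝ) : ℂ :=
  z i + Complex.exp ((↑(ph k z i - s * (2*π - de k z i)) : ℂ) * Complex.I)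
def Eg (i : Fin (k+1)) (s : ℝ) : ℂ :=
  z i + (↑(1 + s * (LL k z i - 2)) : ℂ) * uu k z i

def len (m : ℕ) : ℝ :=
  if Even m then (if m < 2*(k+1) then de k z ((m/2 : ℕ) : Fin (k+1))
    else 2*π - de k z ((m/2 : ℕ) : Fin (k+1)))
  else LL k z ((m/2 : ℕ) : Fin (k+1)) - 2

def G (m : ℕ) (s : ℝ) : ℂ :=
  if Even m then (if m < 2*(k+1) then A1 k z ((m/2 : ℕ) : Fin (k+1)) s
    else A2 k z ((m/2 : ℕ) : Fin (k+1)) s)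
  else Eg k z ((m/2 : ℕ) : Fin (k+1)) s

def idx (t : ℝ) : ℕ := min (⌊(4*(k+1) : ℝ) * t⌋.toNat) (4*(k+1)-1)
def sig (t : ℝ) : ℂ := G k z (idx k t) ((4*(k+1) : ℝ) * t - idx k t)
def pm (m : ℕ) (t : ℝ) : ℂ := G k z m ((4*(k+1) : ℝ) * t - m)

-- basic facts
lemma exp_per {x y : ℝ} (m : ℤ) (h : y = x + 2*π*m) :
    Complex.exp ((y : ℂ) * Complex.I) = Complex.exp ((x:ℂ) * Complex.I) := by
  subst h
  push_cast
  rw [add_mul, Complex.exp_add,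
    show (2*(π:ℂ)*↑m*Complex.I) = ↑m * (2*π*Complex.I) by ring,
    Complex.exp_int_mul_two_pi_mul_I, mul_one]

variable {k z}

lemma de_nonneg (i : Fin (k+1)) : 0 ≤ de k z i := by
  have h := Int.fract_nonneg ((aa k z i - ph k z i)/(2*π))
  have h2 : de k z i = 2*π * Int.fract ((aa k z i - ph k z i)/(2*π)) := by
    rw [Int.fract]; field_simp [de]; rfl
  rw [h2]; positivity

lemma de_lt (i : Fin (k+1)) : de k z i < 2*π := by
  have h := Int.fract_lt_one ((aa k z i - ph k z i)/(2*π))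
  have h2 : de k z i = 2*π * Int.fract ((aa k z i - ph k z i)/(2*π)) := by
    rw [Int.fract]; field_simp [de]; rfl
  rw [h2]
  have : (0:ℝ) < 2*π := by positivity
  nlinarith [Int.fract_nonneg ((aa k z i - ph k z i)/(2*π))]

section dist2

variable (hL : ∀ i, 2 < LL k z i)
include hL

lemma zsub_ne (i : Fin (k+1)) : z (i+1) - z i ≠ 0 := by
  have := hL i
  have : z i ≠ z (i+1) := by
    intro h; rw [LL, h, dist_self] at this; linarith
  exact sub_ne_zero.2 (Ne.symm this)

lemma abs_uu (i : Fin (k+1)) : ‖uu k z i‖ = 1 := by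
  have h0 : LL k z i ≠ 0 := by have := hL i; positivity
  rw [uu, norm_div, Complex.norm_real, Real.norm_eq_abs]
  rw [show ‖z (i+1) - z i‖ = LL k z i by
    rw [LL, dist_comm, Complex.dist_eq]]
  field_simp [abs_of_pos (lt_trans two_pos (hL i))]
  exact (abs_of_pos (lt_trans two_pos (hL i))).symm

lemma uu_ne (i : Fin (k+1)) : uu k z i ≠ 0 := by
  intro h
  have := abs_uu hL i
  rw [h] at this; simp at this

lemma exp_aa (i : Fin (k+1)) : Complex.exp ((aa k z i : ℂ) * Complex.I) = uu k z i := by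
  have := Complex.norm_mul_exp_arg_mul_I (uu k z i)
  rw [abs_uu hL i] at this
  simpa [aa] using this

lemma exp_top (i : Fin (k+1)) :
    Complex.exp ((↑(ph k z i + de k z i) : ℂ) * Complex.I) = uu k z i := by
  rw [exp_per (x := aa k z i) (y := ph k z i + de k z i)
    (-⌊(aa k z i - ph k z i)/(2*π)⌋) (by rw [de]; push_cast; ring), exp_aa hL]

lemma exp_ph (i : Fin (k+1)) :
    Complex.exp ((ph k z i : ℂ) * Complex.I) = - uu k z (i-1) := by
  rw [ph]; push_cast
  rw [add_mul, Complex.exp_add, Complex.exp_pi_mul_I, exp_aa hL]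
  ring

-- endpoint values
lemma A1_one (i : Fin (k+1)) : A1 k z i 1 = z i + uu k z i := by
  rw [A1, one_mul, exp_top hL]

lemma A2_one (i : Fin (k+1)) : A2 k z i 1 = z i + uu k z i := by
  rw [A2]
  rw [exp_per (x := ph k z i + de k z i) (y := ph k z i - 1*(2*π - de k z i))
    (-1 : ℤ) (by push_cast; ring), exp_top hL]

lemma A1_zero (i : Fin (k+1)) : A1 k z i 0 = z i - uu k z (i-1) := by
  rw [A1]; norm_num [exp_ph hL i]; ring

lemma A2_zero (i : Fin (k+1)) : A2 k z i 0 = z i - uu k z (i-1) := by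
  rw [A2]; norm_num [exp_ph hL i]; ring

omit hL in
lemma Eg_zero (i : Fin (k+1)) : Eg k z i 0 = z i + uu k z i := by
  rw [Eg]; norm_num

lemma Eg_one (i : Fin (k+1)) : Eg k z i 1 = z (i+1) - uu k z i := by
  have h0 : LL k z i ≠ 0 := by have := hL i; positivity
  have hz : ((LL k z i : ℝ) : ℂ) * uu k z i = z (i+1) - z i := by
    rw [uu, mul_div_assoc', mul_comm, mul_div_assoc, div_self (by exact_mod_cast h0 : ((LL k z i : ℝ):ℂ) ≠ 0), mul_one]
  rw [Eg]; push_cast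
  have : (1 + 1 * ((LL k z i : ℝ) - 2) : ℂ) = ((LL k z i : ℝ) : ℂ) - 1 := by push_cast; ring
  rw [this, sub_mul, hz]; ring


-- junctions
lemma G_junction {m : ℕ} (hm : m + 1 < 4*(k+1)) :
    G k z m 1 = G k z (m+1) 0 := by
  rcases Nat.even_or_odd m with he | ho
  · -- m even, m = 2j, next piece is the edge
    obtain ⟨j, rfl⟩ := he
    have he : Even (j + j) := ⟨j, rfl⟩
    have hne : ¬ Even (j+j+1) := by simp [Nat.even_add_one, he]
    have hd : (j+j+1)/2 = (j+j)/2 := by omega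
    rw [G, G, if_pos he, if_neg hne, hd, Eg_zero]
    split_ifs with h
    · rw [A1_one hL]
    · rw [A2_one hL]
  · -- m odd, m = 2j+1 edge, next is arc at vertex j+1
    obtain ⟨j, rfl⟩ := ho
    have hne : ¬ Even (2*j+1) := by simp [Nat.even_add_one]
    have he2 : Even (2*j+1+1) := by refine ⟨j+1, by ring⟩
    have hd1 : (2*j+1)/2 = j := by omega
    have hd2 : (2*j+1+1)/2 = j+1 := by omega
    have hcast : ((j+1 : ℕ) : Fin (k+1)) = ((j:ℕ) : Fin (k+1)) + 1 := by push_cast; ring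
    have hsub : (((j:ℕ) : Fin (k+1)) + 1) - 1 = ((j:ℕ) : Fin (k+1)) := by exact add_sub_cancel_right _ _
    rw [G, G, if_neg hne, if_pos he2, hd1, hd2, Eg_one hL, hcast]
    split_ifs with h
    · rw [A1_zero hL, hsub]
    · rw [A2_zero hL, hsub]

lemma G_closed : G k z (4*(k+1)-1) 1 = G k z 0 0 := by
  have hne : ¬ Even (4*(k+1)-1) := by
    refine Nat.not_even_iff_odd.2 ⟨2*k+1, by omega⟩
  have hd : (4*(k+1)-1)/2 = 2*k+1 := by omega
  have hcast : ((2*k+1 : ℕ) : Fin (k+1)) = ((k:ℕ) : Fin (k+1)) := by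
    have h' : (2*k+1 : ℕ) = (k+1) + k := by omega
    rw [h', Nat.cast_add, Fin.natCast_self, zero_add]
  have hcast2 : (((k:ℕ) : Fin (k+1)) + 1) = 0 := by
    have : ((k:ℕ) : Fin (k+1)) + 1 = ((k+1 : ℕ) : Fin (k+1)) := by push_cast; ring
    rw [this, Fin.natCast_self]
  have he0 : Even 0 := Even.zero
  have h0 : (0:ℕ) < 2*(k+1) := by omega
  rw [G, G, if_neg hne, if_pos he0, if_pos h0, hd, hcast, Eg_one hL, hcast2,
    A1_zero hL]
  congr 1
  simp only [Nat.zero_div, Nat.cast_zero]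
  rw [← eq_sub_of_add_eq hcast2]

-- Lipschitz bounds for pieces
omit hL in
lemma lip_arc (c : ℂ) (x d : ℝ) :
    LipschitzWith (Real.toNNReal |d|) (fun s : ℝ => c + Complex.exp ((↑(x + s * d) : ℂ) * Complex.I)) := by
  have h1 : (fun s : ℝ => c + Complex.exp ((↑(x + s * d) : ℂ) * Complex.I))
      = (fun w : ℂ => c + w) ∘ (circleMap 0 1) ∘ (fun s : ℝ => x + s * d) := by
    funext s; simp [circleMap]
  rw [h1]
  have l1 : LipschitzWith 1 (fun w : ℂ => c + w) := by
    apply LipschitzWith.of_dist_le_mul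
    intro a b; rw [dist_add_left]; simp
  have l2 : LipschitzWith (Real.nnabs 1) (circleMap 0 1) := lipschitzWith_circleMap 0 1
  have l3 : LipschitzWith (Real.toNNReal |d|) (fun s : ℝ => x + s * d) := by
    apply LipschitzWith.of_dist_le_mul
    intro s t
    rw [Real.dist_eq, Real.dist_eq]
    have : x + s*d - (x + t*d) = (s - t)*d := by ring
    rw [this, abs_mul]
    rw [Real.coe_toNNReal _ (abs_nonneg d)]
    nlinarith [abs_nonneg (s - t), abs_nonneg d]
  have := (l1.comp l2).comp l3
  convert this using 1
  simp
  rfl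

omit hL in
lemma lip_seg (i : Fin (k+1)) (h1 : ‖uu k z i‖ = 1) (h2 : 0 ≤ LL k z i - 2) :
    LipschitzWith (Real.toNNReal (LL k z i - 2)) (Eg k z i) := by
  apply LipschitzWith.of_dist_le_mul
  intro s t
  rw [Eg, Eg, Complex.dist_eq]
  have : z i + (↑(1 + s * (LL k z i - 2)) : ℂ) * uu k z i
      - (z i + (↑(1 + t * (LL k z i - 2)) : ℂ) * uu k z i)
      = (↑((s - t) * (LL k z i - 2)) : ℂ) * uu k z i := by push_cast; ring
  rw [this, norm_mul, h1, mul_one, Complex.norm_real, Real.norm_eq_abs, abs_mul,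
    Real.coe_toNNReal _ h2, Real.dist_eq, abs_of_nonneg h2, mul_comm]

lemma len_nonneg (m : ℕ) : 0 ≤ len k z m := by
  rw [len]
  split_ifs
  · exact de_nonneg _
  · linarith [de_lt (z := z) (((m/2 : ℕ)) : Fin (k+1))]
  · linarith [hL (((m/2 : ℕ)) : Fin (k+1))]

lemma lip_G (m : ℕ) : LipschitzWith (Real.toNNReal (len k z m)) (G k z m) := by
  rw [len]; unfold G
  split_ifs with h1 h2
  · have := lip_arc (z ((m/2 : ℕ) : Fin (k+1))) (ph k z ((m/2 : ℕ) : Fin (k+1)))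
      (de k z ((m/2 : ℕ) : Fin (k+1)))
    rwa [abs_of_nonneg (de_nonneg _)] at this
  · have := lip_arc (z ((m/2 : ℕ) : Fin (k+1))) (ph k z ((m/2 : ℕ) : Fin (k+1)))
      (-(2*π - de k z ((m/2 : ℕ) : Fin (k+1))))
    rw [abs_neg, abs_of_nonneg (by linarith [de_lt (z := z) (((m/2 : ℕ)) : Fin (k+1))])] at this
    convert this using 3 with s
    rw [A2]
    ring_nf
  · exact lip_seg _ (abs_uu hL _) (by linarith [hL (((m/2 : ℕ)) : Fin (k+1))])

omit hL in
lemma cont_G (m : ℕ) : Continuous (G k z m) := by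
  unfold G
  have harc : ∀ (c : ℂ) (x d : ℝ),
      Continuous (fun s : ℝ => c + Complex.exp ((↑(x + s * d) : ℂ) * Complex.I)) := by
    intro c x d
    fun_prop
  split_ifs
  · exact harc _ _ _
  · have := harc (z ((m/2 : ℕ) : Fin (k+1))) (ph k z ((m/2 : ℕ) : Fin (k+1)))
      (-(2*π - de k z ((m/2 : ℕ) : Fin (k+1))))
    convert this using 2 with s
    rw [A2]
    ring_nf
  · rw [show Eg k z ((m/2 : ℕ) : Fin (k+1)) = fun s =>
      z ((m/2 : ℕ) : Fin (k+1)) + (↑(1 + s * (LL k z ((m/2 : ℕ) : Fin (k+1)) - 2)) : ℂ)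
        * uu k z ((m/2 : ℕ) : Fin (k+1)) from rfl]
    fun_prop

lemma sig_eq_pm {m : ℕ} (hm : m < 4*(k+1)) :
    EqOn (sig k z) (pm k z m) (Icc ((m : ℝ)/(4*(k+1) : ℝ)) ((m+1 : ℝ)/(4*(k+1) : ℝ))) := by
  intro t ht
  have hN : (0:ℝ) < (4*(k+1) : ℝ) := by positivity
  obtain ⟨h1, h2⟩ := ht
  rw [div_le_iff₀ hN] at h1
  rw [le_div_iff₀ hN] at h2
  rw [mul_comm] at h1 h2
  rcases lt_or_eq_of_le h2 with hx | hx
  · have hfl : ⌊(4*(k+1) : ℝ) * t⌋ = (m : ℤ) := by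
      rw [Int.floor_eq_iff]
      constructor
      · exact_mod_cast h1
      · push_cast; exact hx
    have hidx : idx k t = m := by
      rw [idx, hfl, Int.toNat_natCast]
      omega
    rw [sig, hidx, pm]
  · by_cases hlast : m + 1 < 4*(k+1)
    · have hfl : ⌊(4*(k+1) : ℝ) * t⌋ = ((m : ℤ) + 1) := by
        rw [hx]
        rw [show ((m:ℝ) + 1) = (((m+1 : ℕ) : ℤ) : ℝ) by push_cast; ring]
        rw [Int.floor_intCast]
        push_cast; ring
      have hidx : idx k t = m + 1 := by
        rw [idx, hfl]
        rw [show ((m:ℤ)+1).toNat = m + 1 by omega]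
        omega
      rw [sig, hidx, pm, hx]
      push_cast
      rw [show ((m:ℝ) + 1 - ((m:ℝ) + 1) : ℝ) = 0 by ring, show ((m:ℝ) + 1 - (m:ℝ) : ℝ) = 1 by ring]
      exact (G_junction hL hlast).symm
    · have hfl : ⌊(4*(k+1) : ℝ) * t⌋ = ((m : ℤ) + 1) := by
        rw [hx]
        rw [show ((m:ℝ) + 1) = (((m+1 : ℕ) : ℤ) : ℝ) by push_cast; ring]
        rw [Int.floor_intCast]
        push_cast; ring
      have hidx : idx k t = m := by
        rw [idx, hfl]
        rw [show ((m:ℤ)+1).toNat = m + 1 by omega]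
        omega
      rw [sig, hidx, pm]

omit hL in
lemma cont_pm (m : ℕ) : Continuous (pm k z m) := by
  unfold pm
  exact (cont_G m).comp (by fun_prop)

lemma lip_pm (m : ℕ) :
    LipschitzWith (Real.toNNReal (len k z m) * Real.toNNReal (4*(k+1) : ℝ)) (pm k z m) := by
  unfold pm
  apply (lip_G hL m).comp
  apply LipschitzWith.of_dist_le_mul
  intro s t
  have hnn : (0:ℝ) ≤ (4*(k+1) : ℝ) := by positivity
  rw [Real.dist_eq, Real.dist_eq, Real.coe_toNNReal _ hnn]
  rw [show (4*(k+1) : ℝ) * s - ↑m - ((4*(k+1) : ℝ) * t - ↑m) = (4*(k+1) : ℝ)*(s - t) by ring,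
    abs_mul, abs_of_nonneg hnn]

lemma cont_sig : ContinuousOn (sig k z) (Icc 0 1) := by
  have main : ∀ M, M ≤ 4*(k+1) → ContinuousOn (sig k z) (Icc 0 ((M:ℝ)/(4*(k+1) : ℝ))) := by
    intro M
    induction M with
    | zero => intro _; simp
    | succ M ih =>
        intro hM
        have hN : (0:ℝ) < (4*(k+1) : ℝ) := by positivity
        have hc : ((M+1:ℕ):ℝ) = (M:ℝ)+1 := by push_cast; ring
        rw [hc]
        have h1 : (0:ℝ) ≤ (M:ℝ)/(4*(k+1) : ℝ) := by positivity
        have h2 : (M:ℝ)/(4*(k+1):ℝ) ≤ ((M:ℝ)+1)/(4*(k+1):ℝ) := by gcongr; linarith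
        apply cont_glue h1 h2 (ih (by omega))
        exact (cont_pm M).continuousOn.congr (sig_eq_pm hL (by omega))
  have hfin := main (4*(k+1)) le_rfl
  rw [show (((4*(k+1) : ℕ)):ℝ)/(4*(k+1) : ℝ) = 1 by push_cast; field_simp] at hfin
  exact hfin


lemma evar_sig : eVariationOn (sig k z) (Icc 0 1)
    ≤ ENNReal.ofReal (∑ m ∈ Finset.range (4*(k+1)), len k z m) := by
  have hN : (0:ℝ) < (4*(k+1) : ℝ) := by positivity
  have main : ∀ M, M ≤ 4*(k+1) → eVariationOn (sig k z) (Icc 0 ((M:ℝ)/(4*(k+1) : ℝ)))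
      ≤ ENNReal.ofReal (∑ m ∈ Finset.range M, len k z m) := by
    intro M
    induction M with
    | zero =>
        intro _
        simp only [Nat.cast_zero, zero_div, Set.Icc_self, Finset.range_zero, Finset.sum_empty]
        rw [eVariationOn.subsingleton (sig k z) subsingleton_singleton]
        exact bot_le
    | succ M ih =>
        intro hM
        have hc : ((M+1:ℕ):ℝ) = (M:ℝ)+1 := by push_cast; ring
        rw [hc]
        have h1 : (0:ℝ) ≤ (M:ℝ)/(4*(k+1) : ℝ) := by positivity
        have h2 : (M:ℝ)/(4*(k+1):ℝ) ≤ ((M:ℝ)+1)/(4*(k+1):ℝ) := by gcongr; linarith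
        have hsplit := eVariationOn.Icc_add_Icc (sig k z) (s := univ) h1 h2 (mem_univ _)
        simp only [univ_inter] at hsplit
        rw [← hsplit]
        have hblock : eVariationOn (sig k z) (Icc ((M:ℝ)/(4*(k+1):ℝ)) (((M:ℝ)+1)/(4*(k+1):ℝ)))
            ≤ ENNReal.ofReal (len k z M) := by
          rw [eVariationOn.eq_of_eqOn (sig_eq_pm hL (by omega : M < 4*(k+1)))]
          have hlip := (lip_pm hL M).lipschitzOnWith
            (s := Icc ((M:ℝ)/(4*(k+1):ℝ)) (((M:ℝ)+1)/(4*(k+1):ℝ)))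
          have := evar_lip h2 hlip
          refine this.trans ?_
          have hw : ((M:ℝ)+1)/(4*(k+1):ℝ) - (M:ℝ)/(4*(k+1):ℝ) = 1/(4*(k+1):ℝ) := by
            field_simp
            ring
          rw [hw]
          rw [ENNReal.coe_mul]
          rw [show ((Real.toNNReal (len k z M) : ℝ≥0) : ℝ≥0∞) = ENNReal.ofReal (len k z M) from rfl]
          rw [show ((Real.toNNReal (4*(k+1):ℝ) : ℝ≥0) : ℝ≥0∞) = ENNReal.ofReal (4*(k+1):ℝ) from rfl]
          rw [mul_assoc, ← ENNReal.ofReal_mul (le_of_lt hN), mul_one_div,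
            div_self (ne_of_gt hN), ENNReal.ofReal_one, mul_one]
        calc eVariationOn (sig k z) (Icc 0 ((M:ℝ)/(4*(k+1):ℝ)))
              + eVariationOn (sig k z) (Icc ((M:ℝ)/(4*(k+1):ℝ)) (((M:ℝ)+1)/(4*(k+1):ℝ)))
            ≤ ENNReal.ofReal (∑ m ∈ Finset.range M, len k z m) + ENNReal.ofReal (len k z M) :=
              add_le_add (ih (by omega)) hblock
          _ = ENNReal.ofReal (∑ m ∈ Finset.range (M+1), len k z m) := by
              rw [← ENNReal.ofReal_add (Finset.sum_nonneg fun m _ => len_nonneg hL m)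
                (len_nonneg hL M), Finset.sum_range_succ]
  have hfin := main (4*(k+1)) le_rfl
  rw [show (((4*(k+1) : ℕ)):ℝ)/(4*(k+1) : ℝ) = 1 by push_cast; field_simp] at hfin
  exact hfin

lemma sig_image {m : ℕ} (hm : m < 4*(k+1)) {s : ℝ} (hs : s ∈ Icc (0:ℝ) 1) :
    ∃ t ∈ Icc (0:ℝ) 1, sig k z t = G k z m s := by
  have hN : (0:ℝ) < (4*(k+1) : ℝ) := by positivity
  refine ⟨((m:ℝ) + s)/(4*(k+1):ℝ), ⟨div_nonneg (by linarith [hs.1] : (0:ℝ) ≤ (m:ℝ) + s) (le_of_lt hN), ?_⟩, ?_⟩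
  · rw [div_le_one hN]
    have : (m:ℝ) + 1 ≤ (4*(k+1):ℝ) := by exact_mod_cast Nat.succ_le_of_lt hm
    linarith [hs.2]
  · have hmem : ((m:ℝ) + s)/(4*(k+1):ℝ) ∈ Icc ((m : ℝ)/(4*(k+1) : ℝ)) ((m+1 : ℝ)/(4*(k+1) : ℝ)) := by
      constructor
      · gcongr; linarith [hs.1]
      · gcongr; linarith [hs.2]
    rw [sig_eq_pm hL hm hmem, pm]
    congr 1
    field_simp
    ring

lemma sig_closed : sig k z 0 = sig k z 1 := by
  have hN : (0:ℝ) < (4*(k+1) : ℝ) := by positivity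
  have h0 : sig k z 0 = G k z 0 0 := by
    have h00 : idx k 0 = 0 := by
      rw [idx]
      norm_num
    rw [sig, h00]
    norm_num
  have h1 : sig k z 1 = G k z (4*(k+1)-1) 1 := by
    have hfl : ⌊(4*(k+1) : ℝ) * 1⌋ = ((4*(k+1):ℕ) : ℤ) := by
      rw [mul_one, show ((4*(k+1)):ℝ) = (((4*(k+1):ℕ) : ℤ) : ℝ) by push_cast; ring,
        Int.floor_intCast]
    have hidx : idx k 1 = 4*(k+1)-1 := by
      rw [idx, hfl, Int.toNat_natCast]
      omega
    rw [sig, hidx]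
    congr 1
    have : ((4*(k+1)-1 : ℕ) : ℝ) = (4*(k+1) : ℝ) - 1 := by
      have h4 : (1:ℕ) ≤ 4*(k+1) := by omega
      push_cast [h4]
      ring
    rw [this]
    ring
  rw [h0, h1, G_closed hL]


omit hL in
lemma G_eval_A1 (i : Fin (k+1)) (s : ℝ) : G k z (2*i.val) s = A1 k z i s := by
  have hi := i.isLt
  rw [G, if_pos (even_two_mul _), if_pos (by omega), show (2*i.val)/2 = i.val by omega,
    Fin.cast_val_eq_self]

omit hL in
lemma G_eval_A2 (i : Fin (k+1)) (s : ℝ) : G k z (2*(k+1)+2*i.val) s = A2 k z i s := by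
  have hi := i.isLt
  have he : Even (2*(k+1)+2*i.val) := ⟨(k+1)+i.val, by ring⟩
  have hcast : (((k+1)+i.val : ℕ) : Fin (k+1)) = i := by
    rw [Nat.cast_add, Fin.natCast_self, zero_add, Fin.cast_val_eq_self]
  rw [G, if_pos he, if_neg (by omega), show (2*(k+1)+2*i.val)/2 = (k+1)+i.val by omega, hcast]

omit hL in
lemma len_sum : ∑ m ∈ Finset.range (4*(k+1)), len k z m
    = 2*π*(k+1) + 2*(∑ i : Fin (k+1), LL k z i) - 4*(k+1) := by
  have hsplit : ∑ m ∈ Finset.range (4*(k+1)), len k z m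
      = ∑ m ∈ Finset.range (2*(k+1)), len k z m
        + ∑ m ∈ Finset.range (2*(k+1)), len k z (2*(k+1)+m) := by
    rw [show 4*(k+1) = 2*(k+1) + 2*(k+1) by ring, Finset.sum_range_add]
  have heval1 : ∀ j, j < k+1 → len k z (2*j) = de k z ((j:ℕ) : Fin (k+1)) := by
    intro j hj
    rw [len, if_pos (even_two_mul _), if_pos (by omega), show (2*j)/2 = j by omega]
  have heval2 : ∀ j, j < k+1 → len k z (2*j+1) = LL k z ((j:ℕ) : Fin (k+1)) - 2 := by
    intro j hj
    rw [len, if_neg (by simp [Nat.even_add_one, Nat.even_mul])]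
    rw [show (2*j+1)/2 = j by omega]
  have hcastj : ∀ j : ℕ, (((k+1)+j : ℕ) : Fin (k+1)) = ((j:ℕ) : Fin (k+1)) := by
    intro j
    rw [Nat.cast_add, Fin.natCast_self, zero_add]
  have heval3 : ∀ j, j < k+1 → len k z (2*(k+1)+2*j) = 2*π - de k z ((j:ℕ) : Fin (k+1)) := by
    intro j hj
    have he : Even (2*(k+1)+2*j) := ⟨(k+1)+j, by ring⟩
    rw [len, if_pos he, if_neg (by omega), show (2*(k+1)+2*j)/2 = (k+1)+j by omega, hcastj]
  have heval4 : ∀ j, j < k+1 → len k z (2*(k+1)+(2*j+1)) = LL k z ((j:ℕ) : Fin (k+1)) - 2 := by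
    intro j hj
    have hne : ¬ Even (2*(k+1)+(2*j+1)) := by
      simp [Nat.even_add, Nat.even_add_one, Nat.even_mul]
    rw [len, if_neg hne, show (2*(k+1)+(2*j+1))/2 = (k+1)+j by omega, hcastj]
  have hpair1 : ∑ m ∈ Finset.range (2*(k+1)), len k z m
      = ∑ j ∈ Finset.range (k+1), (de k z ((j:ℕ) : Fin (k+1)) + (LL k z ((j:ℕ) : Fin (k+1)) - 2)) := by
    rw [sum_pair]
    refine Finset.sum_congr rfl fun j hj => ?_
    rw [Finset.mem_range] at hj
    rw [heval1 j hj, heval2 j hj]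
  have hpair2 : ∑ m ∈ Finset.range (2*(k+1)), len k z (2*(k+1)+m)
      = ∑ j ∈ Finset.range (k+1),
          ((2*π - de k z ((j:ℕ) : Fin (k+1))) + (LL k z ((j:ℕ) : Fin (k+1)) - 2)) := by
    rw [sum_pair (fun m => len k z (2*(k+1)+m))]
    refine Finset.sum_congr rfl fun j hj => ?_
    rw [Finset.mem_range] at hj
    rw [heval3 j hj, heval4 j hj]
  rw [hsplit, hpair1, hpair2, ← Finset.sum_add_distrib]
  have : ∀ j ∈ Finset.range (k+1),
      (de k z ((j:ℕ) : Fin (k+1)) + (LL k z ((j:ℕ) : Fin (k+1)) - 2))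
      + ((2*π - de k z ((j:ℕ) : Fin (k+1))) + (LL k z ((j:ℕ) : Fin (k+1)) - 2))
      = 2*π + 2 * LL k z ((j:ℕ) : Fin (k+1)) - 4 := by
    intro j _; ring
  rw [Finset.sum_congr rfl this, Finset.sum_sub_distrib, Finset.sum_add_distrib,
    Finset.sum_const, Finset.sum_const, Finset.card_range, ← Finset.mul_sum]
  have hrange : ∑ j ∈ Finset.range (k+1), LL k z ((j:ℕ) : Fin (k+1))
      = ∑ i : Fin (k+1), LL k z i := by
    rw [← Fin.sum_univ_eq_sum_range (fun j => LL k z ((j:ℕ) : Fin (k+1))) (k+1)]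
    exact Finset.sum_congr rfl fun i _ => by rw [Fin.cast_val_eq_self]
  rw [hrange]
  push_cast
  ring

lemma cover (i : Fin (k+1)) (c : ℂ) (hc : dist c (z i) ≤ 2) :
    ∃ t ∈ Icc (0:ℝ) 1, dist (sig k z t) c ≤ 1 := by
  have hm1 : 2*i.val < 4*(k+1) := by have := i.isLt; omega
  have hm2 : 2*(k+1)+2*i.val < 4*(k+1) := by have := i.isLt; omega
  by_cases h0 : c = z i
  · obtain ⟨t, ht, hts⟩ := sig_image hL hm1 (left_mem_Icc.2 zero_le_one)
    refine ⟨t, ht, ?_⟩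
    rw [hts, G_eval_A1, h0, A1]
    rw [dist_eq_norm]
    simp [Complex.norm_exp_ofReal_mul_I]
  · set w := c - z i with hw
    have hwne : w ≠ 0 := sub_ne_zero.2 h0
    set r := ‖w‖ with hr
    have hrpos : 0 < r := by
      rw [hr]; exact norm_pos_iff.2 hwne
    have hrle : r ≤ 2 := by
      rw [hr, hw, ← Complex.dist_eq]; exact hc
    set ψ := w.arg with hψ
    have hwexp : (r : ℂ) * Complex.exp ((ψ:ℂ) * Complex.I) = w :=
      Complex.norm_mul_exp_arg_mul_I w
    set x := (ph k z i + de k z i - ψ)/(2*π) with hx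
    set ψ' := (ph k z i + de k z i) - 2*π*Int.fract x with hψ'
    have h2π : (0:ℝ) < 2*π := by positivity
    have hexp : Complex.exp ((ψ':ℂ) * Complex.I) = Complex.exp ((ψ:ℂ) * Complex.I) := by
      apply exp_per (⌊x⌋)
      rw [hψ', Int.fract, hx]
      field_simp
      ring
    have hhi : ψ' ≤ ph k z i + de k z i := by
      rw [hψ']
      nlinarith [Int.fract_nonneg x]
    have hlo : ph k z i + de k z i - 2*π < ψ' := by
      rw [hψ']
      nlinarith [Int.fract_lt_one x]
    have key : ∀ t ∈ Icc (0:ℝ) 1, sig k z t = z i + Complex.exp ((ψ':ℂ) * Complex.I) →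
        ∃ t ∈ Icc (0:ℝ) 1, dist (sig k z t) c ≤ 1 := by
      intro t ht hval
      refine ⟨t, ht, ?_⟩
      rw [hval, Complex.dist_eq]
      have hcz : c = z i + w := by rw [hw]; ring
      rw [hcz, hexp]
      have : z i + Complex.exp ((ψ:ℂ) * Complex.I) - (z i + w)
          = (1 - (r:ℂ)) * Complex.exp ((ψ:ℂ) * Complex.I) := by
        rw [← hwexp]; ring
      rw [this, norm_mul, Complex.norm_exp_ofReal_mul_I, mul_one]
      rw [show (1 - (r:ℂ)) = (((1 - r : ℝ)):ℂ) by push_cast; ring, Complex.norm_real, Real.norm_eq_abs]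
      rw [abs_le]
      constructor <;> linarith
    by_cases hcase : ph k z i ≤ ψ'
    · -- use A1 arc
      by_cases hde : de k z i = 0
      · have hψeq : ψ' = ph k z i := by rw [hde] at hhi; linarith
        obtain ⟨t, ht, hts⟩ := sig_image hL hm1 (left_mem_Icc.2 zero_le_one)
        apply key t ht
        rw [hts, G_eval_A1, A1]
        norm_num [hψeq]
      · have hdepos : 0 < de k z i := lt_of_le_of_ne (de_nonneg i) (Ne.symm hde)
        set s := (ψ' - ph k z i)/(de k z i) with hs
        have hs0 : 0 ≤ s := div_nonneg (by linarith) hdepos.le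
        have hs1 : s ≤ 1 := by
          rw [hs, div_le_one hdepos]; linarith
        obtain ⟨t, ht, hts⟩ := sig_image hL hm1 (mem_Icc.2 ⟨hs0, hs1⟩)
        apply key t ht
        have hang : ph k z i + s * de k z i = ψ' := by
          rw [hs, div_mul_cancel₀ _ hde]; linarith
        rw [hts, G_eval_A1, A1, hang]
    · -- use A2 arc
      have hdlt : 0 < 2*π - de k z i := by linarith [de_lt (z := z) i]
      set s := (ph k z i - ψ')/(2*π - de k z i) with hs
      have hs0 : 0 ≤ s := div_nonneg (by linarith) hdlt.le
      have hs1 : s ≤ 1 := by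
        rw [hs, div_le_one hdlt]; linarith
      obtain ⟨t, ht, hts⟩ := sig_image hL hm2 (mem_Icc.2 ⟨hs0, hs1⟩)
      apply key t ht
      have hang : ph k z i - s * (2*π - de k z i) = ψ' := by
        rw [hs, div_mul_cancel₀ _ (ne_of_gt hdlt)]; linarith
      rw [hts, G_eval_A2, A2, hang]


lemma exists_curve :
    ∃ σ : ℝ → ℂ, ContinuousOn σ (Icc 0 1) ∧ σ 0 = σ 1 ∧
      eVariationOn σ (Icc 0 1)
        ≤ ENNReal.ofReal (π * (∑ i : Fin (k+1), LL k z i) + 2*π) ∧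
      ∀ c : ℂ, (∃ i, dist c (z i) ≤ 2) → ∃ p ∈ σ '' (Icc (0:ℝ) 1), dist p c ≤ 1 := by
  refine ⟨sig k z, cont_sig hL, sig_closed hL, ?_, ?_⟩
  · refine (evar_sig hL).trans (ENNReal.ofReal_le_ofReal ?_)
    rw [len_sum]
    set S := ∑ i : Fin (k+1), LL k z i with hS
    have hsum_ge : 2*((k:ℝ)+1) ≤ S := by
      rw [hS]
      calc (2*((k:ℝ)+1)) = ∑ _i : Fin (k+1), (2:ℝ) := by
            rw [Finset.sum_const, Finset.card_univ, Fintype.card_fin]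
            push_cast; ring
        _ ≤ S := Finset.sum_le_sum (fun i _ => (hL i).le)
    have hπ : (3:ℝ) < π := Real.pi_gt_three
    nlinarith [mul_nonneg (by linarith : (0:ℝ) ≤ π - 2) (by linarith : (0:ℝ) ≤ S - 2*((k:ℝ)+1))]
  · rintro c ⟨i, hci⟩
    obtain ⟨t, ht, hdist⟩ := cover hL i c hci
    exact ⟨sig k z t, mem_image_of_mem _ ht, hdist⟩

end dist2

lemma exists_circle (z0 : ℂ) :
    ∃ σ : ℝ → ℂ, ContinuousOn σ (Icc 0 1) ∧ σ 0 = σ 1 ∧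
      eVariationOn σ (Icc 0 1) ≤ ENNReal.ofReal (2*π) ∧
      ∀ c : ℂ, dist c z0 ≤ 2 → ∃ p ∈ σ '' (Icc (0:ℝ) 1), dist p c ≤ 1 := by
  set σ := fun t : ℝ => z0 + Complex.exp ((↑((0:ℝ) + t * (2*π)) : ℂ) * Complex.I) with hσ
  have hlip := lip_arc z0 0 (2*π)
  have h2π : (0:ℝ) < 2*π := by positivity
  refine ⟨σ, (hlip.continuous).continuousOn, ?_, ?_, ?_⟩
  · simp only [hσ]
    exact congrArg (z0 + ·)
      (exp_per (x := (0:ℝ) + 0*(2*π)) (y := (0:ℝ) + 1*(2*π)) 1 (by push_cast; ring)).symm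
  · have := evar_lip zero_le_one (hlip.lipschitzOnWith (s := Icc (0:ℝ) 1))
    refine this.trans ?_
    rw [show ((Real.toNNReal |2*π| : NNReal) : ENNReal) = ENNReal.ofReal |2*π| from rfl]
    rw [abs_of_nonneg h2π.le]
    norm_num
  · intro c hc
    by_cases h0 : c = z0
    · refine ⟨σ 0, mem_image_of_mem _ (left_mem_Icc.2 zero_le_one), ?_⟩
      rw [hσ, h0]
      have hzz : ((0:ℝ) + 0*(2*π)) = 0 := by ring
      simp only [hzz]
      push_cast
      rw [zero_mul, Complex.exp_zero, Complex.dist_eq]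
      simp
    · set w := c - z0 with hw
      have hwne : w ≠ 0 := sub_ne_zero.2 h0
      set r := ‖w‖ with hr
      have hrpos : 0 < r := norm_pos_iff.2 hwne
      have hrle : r ≤ 2 := by rw [hr, hw, ← Complex.dist_eq]; exact hc
      set ψ := w.arg with hψ
      have hwexp : (r : ℂ) * Complex.exp ((ψ:ℂ) * Complex.I) = w :=
        Complex.norm_mul_exp_arg_mul_I w
      set t := Int.fract (ψ/(2*π)) with ht
      have ht0 : 0 ≤ t := Int.fract_nonneg _
      have ht1 : t ≤ 1 := (Int.fract_lt_one _).le
      refine ⟨σ t, mem_image_of_mem _ (mem_Icc.2 ⟨ht0, ht1⟩), ?_⟩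
      have hang : (0:ℝ) + t * (2*π) = ψ + 2*π*((-⌊ψ/(2*π)⌋ : ℤ) : ℝ) := by
        rw [ht, Int.fract]
        push_cast
        field_simp
        ring
      rw [hσ]
      simp only
      rw [hang, exp_per (-⌊ψ/(2*π)⌋) rfl]
      rw [Complex.dist_eq]
      have hcz : c = z0 + w := by rw [hw]; ring
      rw [hcz]
      have : z0 + Complex.exp ((ψ:ℂ) * Complex.I) - (z0 + w)
          = (1 - (r:ℂ)) * Complex.exp ((ψ:ℂ) * Complex.I) := by
        rw [← hwexp]; ring
      rw [this, norm_mul, Complex.norm_exp_ofReal_mul_I, mul_one]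
      rw [show (1 - (r:ℂ)) = (((1 - r : ℝ)):ℂ) by push_cast; ring, Complex.norm_real, Real.norm_eq_abs]
      rw [abs_le]
      constructor <;> linarith


end Ineq1
end Ineq1Aux



/-- Inequality (1): given a family of closed unit disks `R` (given by its finite set `C`
of centers), a nonempty maximal independent subfamily `I`, and a closed polygonal tour
`P` through the centers of `I` (vertices `v 0, …, v k` in cyclic order, each center of
`I` appearing exactly once), there is a closed rectifiable curve of length at most
`π·|P| + 2π` visiting every disk of the family. -/
theorem stmt_4 (C I : Finset (EuclideanSpace ℝ (Fin 2))) (hsub : I ⊆ C)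
    (hdisj : ∀ c ∈ I, ∀ d ∈ I, c ≠ d → Disjoint (closedBall c 1) (closedBall d 1))
    (hmax : ∀ c ∈ C, ∃ d ∈ I, (closedBall c 1 ∩ closedBall d 1).Nonempty)
    (k : ℕ) (v : Fin (k + 1) → EuclideanSpace ℝ (Fin 2))
    (hinj : Function.Injective v)
    (hrange : Set.range v = (I : Set (EuclideanSpace ℝ (Fin 2))))
    (P : ℝ) (hP : P = ∑ i : Fin (k + 1), dist (v i) (v (i + 1))) :
    ∃ σ : ℝ → EuclideanSpace ℝ (Fin 2),
      ContinuousOn σ (Icc 0 1) ∧ σ 0 = σ 1 ∧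
      eVariationOn σ (Icc 0 1) ≤ ENNReal.ofReal (π * P + 2 * π) ∧
      ∀ c ∈ C, ((σ '' Icc 0 1) ∩ closedBall c 1).Nonempty := by
  classical
  set e := Complex.orthonormalBasisOneI.repr with he
  set z : Fin (k+1) → ℂ := fun i => e.symm (v i) with hz
  have hdistz : ∀ i j : Fin (k+1), dist (z i) (z j) = dist (v i) (v j) := by
    intro i j; rw [hz]; exact e.symm.dist_map _ _
  have hPnonneg : 0 ≤ P := by
    rw [hP]; exact Finset.sum_nonneg fun i _ => dist_nonneg
  have hcd : ∀ c ∈ C, ∃ i : Fin (k+1), dist (e.symm c) (z i) ≤ 2 := by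
    intro c hc
    obtain ⟨d, hdI, x, hx⟩ := hmax c hc
    have hdv : ∃ i, v i = d := by
      have : d ∈ Set.range v := by rw [hrange]; exact Finset.mem_coe.2 hdI
      exact this
    obtain ⟨i, rfl⟩ := hdv
    refine ⟨i, ?_⟩
    have hd2 : dist (e.symm c) (z i) = dist c (v i) := by
      rw [hz]; exact e.symm.dist_map _ _
    rw [hd2]
    have h1 : dist x c ≤ 1 := mem_closedBall.1 hx.1
    have h2 : dist x (v i) ≤ 1 := mem_closedBall.1 hx.2
    calc dist c (v i) ≤ dist c x + dist x (v i) := dist_triangle _ _ _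
      _ ≤ 2 := by rw [dist_comm c x]; linarith
  have hlift : ∀ σc : ℝ → ℂ, eVariationOn (fun t => e (σc t)) (Icc (0:ℝ) 1)
      ≤ eVariationOn σc (Icc (0:ℝ) 1) := by
    intro σc
    have hle := (e.isometry.lipschitz.lipschitzOnWith (s := univ)).comp_eVariationOn_le
      (mapsTo_univ σc (Icc (0:ℝ) 1))
    simpa [Function.comp_def] using hle
  rcases Nat.eq_zero_or_pos k with hk0 | hkpos
  · subst hk0
    obtain ⟨σc, hcont, hclosed, hvar, hcover⟩ := Ineq1.exists_circle (z 0)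
    refine ⟨fun t => e (σc t), e.continuous.comp_continuousOn hcont, congrArg e hclosed, ?_, ?_⟩
    · refine (hlift σc).trans (hvar.trans (ENNReal.ofReal_le_ofReal ?_))
      nlinarith [Real.pi_pos]
    · intro c hc
      obtain ⟨i, hci⟩ := hcd c hc
      have hi0 : i = 0 := Fin.ext (by omega)
      rw [hi0] at hci
      obtain ⟨p, hp, hdp⟩ := hcover (e.symm c) hci
      obtain ⟨t, ht, rfl⟩ := hp
      refine ⟨e (σc t), ⟨mem_image_of_mem _ ht, ?_⟩⟩
      rw [mem_closedBall]
      calc dist (e (σc t)) c = dist (σc t) (e.symm c) := by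
            rw [← e.apply_symm_apply c, e.dist_map, e.symm_apply_apply]
        _ ≤ 1 := hdp
  · have hL : ∀ i, 2 < Ineq1.LL k z i := by
      intro i
      rw [Ineq1.LL, hdistz]
      have hne : i ≠ i + 1 := by
        intro h
        have h1 : (1 : Fin (k+1)) = 0 := (left_eq_add.1 h)
        rw [Fin.one_eq_zero_iff] at h1
        omega
      have hvne : v i ≠ v (i+1) := fun h => hne (hinj h)
      have hvi : v i ∈ I := by
        have : v i ∈ (I : Set (EuclideanSpace ℝ (Fin 2))) := by
          rw [← hrange]; exact ⟨i, rfl⟩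
        exact_mod_cast this
      have hvi1 : v (i+1) ∈ I := by
        have : v (i+1) ∈ (I : Set (EuclideanSpace ℝ (Fin 2))) := by
          rw [← hrange]; exact ⟨i+1, rfl⟩
        exact_mod_cast this
      have hdisj' := hdisj _ hvi _ hvi1 hvne
      by_contra hle
      push_neg at hle
      set w := midpoint ℝ (v i) (v (i+1)) with hwdef
      have hw1 : w ∈ closedBall (v i) 1 := by
        rw [mem_closedBall, dist_comm, hwdef, dist_left_midpoint]
        rw [show ‖(2:ℝ)‖ = 2 by simp [Real.norm_eq_abs]]
        linarith
      have hw2 : w ∈ closedBall (v (i+1)) 1 := by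
        rw [mem_closedBall, dist_comm, hwdef, dist_right_midpoint]
        rw [show ‖(2:ℝ)‖ = 2 by simp [Real.norm_eq_abs]]
        linarith
      exact (Set.disjoint_left.1 hdisj' hw1) hw2
    obtain ⟨σc, hcont, hclosed, hvar, hcover⟩ := Ineq1.exists_curve hL
    have hPsum : P = ∑ i : Fin (k+1), Ineq1.LL k z i := by
      rw [hP]; exact Finset.sum_congr rfl fun i _ => by rw [Ineq1.LL, hdistz]
    refine ⟨fun t => e (σc t), e.continuous.comp_continuousOn hcont, congrArg e hclosed, ?_, ?_⟩
    · refine (hlift σc).trans (hvar.trans (ENNReal.ofReal_le_ofReal ?_))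
      rw [hPsum]
    · intro c hc
      obtain ⟨i, hci⟩ := hcd c hc
      obtain ⟨p, hp, hdp⟩ := hcover (e.symm c) ⟨i, hci⟩
      obtain ⟨t, ht, rfl⟩ := hp
      refine ⟨e (σc t), ⟨mem_image_of_mem _ ht, ?_⟩⟩
      rw [mem_closedBall]
      calc dist (e (σc t)) c = dist (σc t) (e.symm c) := by
            rw [← e.apply_symm_apply c, e.dist_map, e.symm_apply_apply]
        _ ≤ 1 := hdp
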